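/- Let (Q_i)_{i=0}^N be a sequence of functions S × A → ℝ over a finite MDP with ‖Γ*Q_{i−1} − Q_i‖_∞ ≤ ε for all i = 1,...,N. Then ‖Q* − Q_N‖_∞ ≤ ε/(1−γ) + γᴺ ‖Q* − Q₀‖_∞. -/
import Mathlib


open Finset

section Aux

variable {ι : Type*} [Fintype ι] [Nonempty ι]

lemma aux_bddAbove (f : ι → ℝ) : BddAbove (Set.range f) :=
  (Set.finite_range f).bddAbove

lemma aux_le_ciSup (f : ι → ℝ) (i : ι) : f i ≤ ⨆ j, f j :=
  le_ciSup (aux_bddAbove f) i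

lemma aux_ciSup_nonneg (f : ι → ℝ) : 0 ≤ ⨆ i, |f i| := by
  obtain ⟨i⟩ := (inferInstance : Nonempty ι)
  exact le_trans (abs_nonneg (f i)) (aux_le_ciSup (fun j => |f j|) i)

lemma aux_abs_ciSup_sub (f g : ι → ℝ) (M : ℝ) (h : ∀ i, |f i - g i| ≤ M) :
    |(⨆ i, f i) - ⨆ i, g i| ≤ M := by
  rw [abs_le]
  constructor
  · have : ∀ i, g i ≤ (⨆ j, f j) + M := fun i => by
      have := (abs_le.mp (h i)).1
      have hf := aux_le_ciSup f i
      linarith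
    have := ciSup_le this
    linarith
  · have : ∀ i, f i ≤ (⨆ j, g j) + M := fun i => by
      have := (abs_le.mp (h i)).2
      have hg := aux_le_ciSup g i
      linarith
    have := ciSup_le this
    linarith

end Aux

/-- Error propagation for approximate value iteration: uniform per-iteration
approximation error `ε` yields `‖Q* − Q_N‖_∞ ≤ ε/(1−γ) + γ^N ‖Q* − Q₀‖_∞`. -/
theorem avi_error_propagation_uniform
    {S A : Type*} [Fintype S] [Fintype A] [Nonempty S] [Nonempty A]
    (P : S → A → S → ℝ) (r : S → A → ℝ) (γ : ℝ)
    (hγ0 : 0 ≤ γ) (hγ1 : γ < 1)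
    (hP0 : ∀ s a s', 0 ≤ P s a s') (hP1 : ∀ s a, ∑ s', P s a s' = 1)
    (T : (S × A → ℝ) → S × A → ℝ)
    (hT : ∀ Q : S × A → ℝ, ∀ s a,
      T Q (s, a) = r s a + γ * ∑ s', P s a s' * ⨆ a' : A, Q (s', a'))
    (Qstar : S × A → ℝ) (hQstar : T Qstar = Qstar)
    (N : ℕ) (Q : ℕ → S × A → ℝ) (ε : ℝ) (hε : 0 ≤ ε)
    (herr : ∀ i < N, (⨆ p : S × A, |T (Q i) p - Q (i + 1) p|) ≤ ε) :
    (⨆ p : S × A, |Qstar p - Q N p|)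
      ≤ ε / (1 - γ) + γ ^ N * ⨆ p : S × A, |Qstar p - Q 0 p| := by
  have h1γ : (0:ℝ) < 1 - γ := by linarith
  set D : (S × A → ℝ) → (S × A → ℝ) → ℝ := fun f g => ⨆ p : S × A, |f p - g p| with hD
  -- contraction property
  have hcontr : ∀ f g : S × A → ℝ, D (T f) (T g) ≤ γ * D f g := by
    intro f g
    apply ciSup_le
    rintro ⟨s, a⟩
    have hpt : ∀ s' : A → ℝ, True := fun _ => trivial
    have key : ∀ s' : S, |(⨆ a' : A, f (s', a')) - ⨆ a' : A, g (s', a')| ≤ D f g := by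
      intro s'
      apply aux_abs_ciSup_sub
      intro a'
      exact aux_le_ciSup (fun p : S × A => |f p - g p|) (s', a')
    rw [hT f s a, hT g s a]
    have heq : (r s a + γ * ∑ s', P s a s' * ⨆ a' : A, f (s', a'))
        - (r s a + γ * ∑ s', P s a s' * ⨆ a' : A, g (s', a'))
        = γ * ∑ s', P s a s' * ((⨆ a' : A, f (s', a')) - ⨆ a' : A, g (s', a')) := by
      have h1 : ∀ s' : S, P s a s' * ((⨆ a' : A, f (s', a')) - ⨆ a' : A, g (s', a'))
          = P s a s' * (⨆ a' : A, f (s', a')) - P s a s' * ⨆ a' : A, g (s', a') :=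
        fun s' => mul_sub _ _ _
      simp_rw [h1]
      rw [Finset.sum_sub_distrib, mul_sub]
      ring
    rw [heq, abs_mul, abs_of_nonneg hγ0]
    apply mul_le_mul_of_nonneg_left _ hγ0
    calc |∑ s', P s a s' * ((⨆ a' : A, f (s', a')) - ⨆ a' : A, g (s', a'))|
        ≤ ∑ s', |P s a s' * ((⨆ a' : A, f (s', a')) - ⨆ a' : A, g (s', a'))| :=
          Finset.abs_sum_le_sum_abs _ _
      _ ≤ ∑ s', P s a s' * D f g := by
          apply Finset.sum_le_sum
          intro s' _
          rw [abs_mul, abs_of_nonneg (hP0 s a s')]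
          exact mul_le_mul_of_nonneg_left (key s') (hP0 s a s')
      _ = D f g := by rw [← Finset.sum_mul, hP1 s a, one_mul]
  -- one step bound
  have hstep : ∀ i, i < N → D Qstar (Q (i+1)) ≤ γ * D Qstar (Q i) + ε := by
    intro i hi
    apply ciSup_le
    intro p
    have h1 : |Qstar p - Q (i+1) p| ≤ |T Qstar p - T (Q i) p| + |T (Q i) p - Q (i+1) p| := by
      have : Qstar p - Q (i+1) p = (T Qstar p - T (Q i) p) + (T (Q i) p - Q (i+1) p) := by
        rw [hQstar]; ring
      rw [this]; exact abs_add_le _ _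
    have h2 : |T Qstar p - T (Q i) p| ≤ γ * D Qstar (Q i) :=
      le_trans (aux_le_ciSup (fun q => |T Qstar q - T (Q i) q|) p) (hcontr Qstar (Q i))
    have h3 : |T (Q i) p - Q (i+1) p| ≤ ε :=
      le_trans (aux_le_ciSup (fun q => |T (Q i) q - Q (i+1) q|) p) (herr i hi)
    linarith
  -- induction
  have hD0 : 0 ≤ D Qstar (Q 0) := aux_ciSup_nonneg _
  clear hT hQstar hcontr
  induction N with
  | zero =>
    simp only [pow_zero, one_mul]
    have : 0 ≤ ε / (1 - γ) := div_nonneg hε (le_of_lt h1γ)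
    linarith
  | succ n ih =>
    have hrec : D Qstar (Q n) ≤ ε / (1 - γ) + γ ^ n * D Qstar (Q 0) :=
      ih (fun i hi => herr i (Nat.lt_succ_of_lt hi)) (fun i hi => hstep i (Nat.lt_succ_of_lt hi))
    have h := hstep n (Nat.lt_succ_self n)
    have hkey : γ * (ε / (1 - γ) + γ ^ n * D Qstar (Q 0)) + ε
        = ε / (1 - γ) + γ ^ (n+1) * D Qstar (Q 0) := by
      field_simp
      ring
    calc D Qstar (Q (n+1)) ≤ γ * D Qstar (Q n) + ε := h
      _ ≤ γ * (ε / (1 - γ) + γ ^ n * D Qstar (Q 0)) + ε := by nlinarith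
      _ = ε / (1 - γ) + γ ^ (n+1) * D Qstar (Q 0) := hkey
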